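/- Under the same hypotheses with α > 3, the solution satisfies the improved rate f(x(t)) − min f = o(1/t²) as t → ∞. -/

import Mathlib

open MeasureTheory Filter Asymptotics Set

local notation "⟪" x ", " y "⟫" => @inner ℝ _ _ x y

lemma aux_dini_antitoneOn {φ : ℝ → ℝ} {a : ℝ} (hc : ContinuousOn φ (Ici a))
    (hs : ∀ t, a ≤ t → ∀ r : ℝ, 0 < r → ∀ᶠ z in nhdsWithin t (Ioi t), slope φ t z < r) :
    AntitoneOn φ (Ici a) := by
  intro s hsa t hta hst
  have key := image_le_of_liminf_slope_right_le_deriv_boundary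
    (f := φ) (a := s) (b := t) (B := fun _ => φ s) (B' := fun _ => 0)
    (hc.mono (fun z hz => le_trans hsa hz.1)) le_rfl continuousOn_const
    (fun z _ => hasDerivWithinAt_const z _ (φ s))
    (fun z hz r hr => ((hs z (le_trans hsa hz.1) r hr).frequently))
  exact key (right_mem_Icc.2 hst)

lemma aux_grad_ineq {H : Type*} [NormedAddCommGroup H] [InnerProductSpace ℝ H]
    [CompleteSpace H]
    {F : H → ℝ} (hF : ConvexOn ℝ Set.univ F) {p g : H} (hg : HasGradientAt F g p) (y : H) :
    F p + ⟪g, y - p⟫ ≤ F y := by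
  set v := y - p with hv
  have hc : ∀ s : ℝ, HasDerivAt (fun s : ℝ => p + s • v) v s := by
    intro s
    simpa using ((hasDerivAt_id s).smul_const v).const_add p
  have hF0 : HasFDerivAt F ((InnerProductSpace.toDual ℝ H) g) (p + (0:ℝ) • v) := by
    simpa using hg.hasFDerivAt
  have hd : HasDerivAt (fun s : ℝ => F (p + s • v)) ⟪g, v⟫ 0 := by
    simpa [InnerProductSpace.toDual_apply_apply, Function.comp_def] using hF0.comp_hasDerivAt 0 (hc 0)
  rw [hasDerivAt_iff_tendsto_slope] at hd
  have hd' : Tendsto (slope (fun s : ℝ => F (p + s • v)) 0) (nhdsWithin 0 (Ioi 0)) (nhds ⟪g, v⟫) :=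
    hd.mono_left (nhdsWithin_mono 0 (fun z hz => ne_of_gt hz))
  have hev : ∀ᶠ s in nhdsWithin (0:ℝ) (Ioi 0),
      slope (fun s : ℝ => F (p + s • v)) 0 s ≤ F y - F p := by
    filter_upwards [Ioc_mem_nhdsGT_of_mem (Set.left_mem_Ico.2 zero_lt_one)] with s hs0
    obtain ⟨h0, h1⟩ := hs0
    have hcomb : F (p + s • v) ≤ (1 - s) * F p + s * F y := by
      have h := hF.2 (mem_univ p) (mem_univ y) (by linarith : (0:ℝ) ≤ 1 - s) h0.le (by ring)
      have : (1 - s) • p + s • y = p + s • v := by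
        rw [hv]; module
      rw [this] at h
      simpa using h
    rw [slope_def_field]
    simp only [zero_smul, add_zero, sub_zero]
    rw [div_le_iff₀ h0]
    nlinarith [hcomb]
  have := le_of_tendsto hd' hev
  rw [hv] at this
  linarith

lemma aux_tendsto_of_antitoneOn {φ : ℝ → ℝ} {a m : ℝ} (h : AntitoneOn φ (Ici a))
    (hb : ∀ t, a ≤ t → m ≤ φ t) : ∃ L, Tendsto φ atTop (nhds L) := by
  set F : ℝ → ℝ := fun t => φ (max t a) with hF
  have hanti : Antitone F := fun s t hst =>
    h (le_max_right s a) (le_max_right t a) (max_le_max hst le_rfl)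
  have hbdd : BddBelow (Set.range F) := ⟨m, by rintro y ⟨t, rfl⟩; exact hb _ (le_max_right t a)⟩
  refine ⟨_, (tendsto_atTop_ciInf hanti hbdd).congr' ?_⟩
  filter_upwards [eventually_ge_atTop a] with t ht
  simp [hF, max_eq_left ht]

lemma aux_tendsto_of_monotoneOn {φ : ℝ → ℝ} {a m : ℝ} (h : MonotoneOn φ (Ici a))
    (hb : ∀ t, a ≤ t → φ t ≤ m) : ∃ L, Tendsto φ atTop (nhds L) := by
  set F : ℝ → ℝ := fun t => φ (max t a) with hF
  have hmono : Monotone F := fun s t hst =>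
    h (le_max_right s a) (le_max_right t a) (max_le_max hst le_rfl)
  have hbdd : BddAbove (Set.range F) := ⟨m, by rintro y ⟨t, rfl⟩; exact hb _ (le_max_right t a)⟩
  refine ⟨_, (tendsto_atTop_ciSup hmono hbdd).congr' ?_⟩
  filter_upwards [eventually_ge_atTop a] with t ht
  simp [hF, max_eq_left ht]
set_option maxHeartbeats 1600000 in
theorem stmt11 {H : Type*} [NormedAddCommGroup H] [InnerProductSpace ℝ H] [CompleteSpace H]
    (f : H → ℝ) (hf : ConvexOn ℝ Set.univ f)
    (ftil : H → ℝ → ℝ) (κ : ℝ) (hκ : 0 < κ)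
    (hconv : ∀ m : ℝ, 0 < m → ConvexOn ℝ Set.univ (fun z => ftil z m))
    (dmu : H → ℝ → ℝ)
    (hdmu : ∀ (z : H) (m : ℝ), 0 < m → HasDerivAt (fun m' => ftil z m') (dmu z m) m)
    (hdmubd : ∀ (z : H) (m : ℝ), 0 < m → |dmu z m| ≤ κ)
    (happrox : ∀ (z : H) (m : ℝ), 0 < m → |ftil z m - f z| ≤ κ * m)
    (G : H → ℝ → H)
    (hG : ∀ (z : H) (m : ℝ), 0 < m → HasGradientAt (fun w => ftil w m) (G z m) z)
    (t₀ α : ℝ) (ht₀ : 0 < t₀) (hα : 3 < α)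
    (μ μ' : ℝ → ℝ) (hμpos : ∀ t, t₀ ≤ t → 0 < μ t)
    (hμderiv : ∀ t, t₀ ≤ t → HasDerivAt μ (μ' t) t)
    (hμdec : ∀ t, t₀ ≤ t → μ' t ≤ 0)
    (hμlim : Filter.Tendsto μ Filter.atTop (nhds 0))
    (x x' x'' : ℝ → H)
    (hx : ∀ t, t₀ ≤ t → HasDerivAt x (x' t) t)
    (hx' : ∀ t, t₀ ≤ t → HasDerivAt x' (x'' t) t)
    (heq : ∀ t, t₀ ≤ t → x'' t + (α / t) • x' t + G (x t) (μ t) = 0)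
    (hH1 : MeasureTheory.IntegrableOn (fun t => t * μ t) (Set.Ici t₀))
    (xs : H) (hxs : ∀ y, f xs ≤ f y) :
    (fun t => f (x t) - f xs) =o[Filter.atTop] (fun t => 1 / t ^ 2) := by
  have hLip : ∀ (z : H) (m₁ m₂ : ℝ), 0 < m₁ → 0 < m₂ →
      |ftil z m₂ - ftil z m₁| ≤ κ * |m₂ - m₁| := by
    intro z m₁ m₂ h1 h2
    have := Convex.norm_image_sub_le_of_norm_hasDerivWithin_le
      (f := fun m' => ftil z m') (f' := fun m => dmu z m) (s := Ioi (0:ℝ)) (C := κ)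
      (fun m hm => (hdmu z m hm).hasDerivWithinAt)
      (fun m hm => by rw [Real.norm_eq_abs]; exact hdmubd z m hm)
      (convex_Ioi 0) h1 h2
    simpa [Real.norm_eq_abs] using this
  set ψ : ℝ → ℝ := fun t => ftil (x t) (μ t) with hψdef
  set w : ℝ → ℝ := fun t => ψ t - f xs + κ * μ t with hwdef
  set P : ℝ → ℝ := fun t => ⟪x' t, x' t⟫ with hPdef
  set Q : ℝ → ℝ := fun t => ⟪x t - xs, x' t⟫ with hQdef
  set U : ℝ → ℝ := fun t => ⟪x t - xs, x t - xs⟫ with hUdef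
  set q : ℝ → ℝ := fun t => t^2 * w t + t^2/2 * P t with hqdef
  set h₁ : ℝ → ℝ := fun t => (α-1)/2 * U t + t * Q t with h1def
  set fI : ℝ → ℝ → ℝ := fun lam s => (lam-2)*(s*w s) + (α-1-lam)*(s*P s) with hfIdef
  set II : ℝ → ℝ → ℝ := fun lam t => ∫ s in t₀..t, fI lam s with hIdef
  set Jc : ℝ → ℝ := fun t => ∫ s in t₀..t, s * μ s with hJdef
  set D : ℝ → ℝ → ℝ := fun lam t =>
    -(f xs) * t^2 + κ * (t^2 * μ t) + t^2/2 * P t + lam * h₁ t with hDdef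
  set Φ : ℝ → ℝ → ℝ := fun lam t =>
    t^2 * ψ t + D lam t + II lam t - 2*lam*κ * Jc t with hΦdef
  set E : ℝ → ℝ → ℝ := fun lam t => q t + lam * h₁ t with hEdef
  clear_value ψ w P Q U q h₁ fI II Jc D Φ E
  have hΦE : ∀ lam t, Φ lam t = E lam t + II lam t - 2*lam*κ * Jc t := by
    intro lam t
    simp only [hΦdef, hDdef, hEdef, hqdef, hwdef, h1def]
    ring
  -- continuity
  have hμanti : AntitoneOn μ (Ici t₀) := by
    apply antitoneOn_of_deriv_nonpos (convex_Ici t₀)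
      (fun t ht => (hμderiv t ht).continuousAt.continuousWithinAt)
      (fun t ht => by
        rw [interior_Ici] at ht
        exact ((hμderiv t ht.le).differentiableAt.differentiableWithinAt))
    intro t ht
    rw [interior_Ici] at ht
    rw [(hμderiv t ht.le).deriv]
    exact hμdec t ht.le
  have hxc : ContinuousOn x (Ici t₀) := fun t ht => (hx t ht).continuousAt.continuousWithinAt
  have hx'c : ContinuousOn x' (Ici t₀) := fun t ht => (hx' t ht).continuousAt.continuousWithinAt
  have hμc : ContinuousOn μ (Ici t₀) := fun t ht => (hμderiv t ht).continuousAt.continuousWithinAt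
  have hψc : ContinuousOn ψ (Ici t₀) := by
    rw [hψdef]
    intro t ht
    have hμt : 0 < μ t := hμpos t ht
    have hFc : ContinuousAt (fun z' : H => ftil z' (μ t)) (x t) :=
      (hG (x t) (μ t) hμt).differentiableAt.continuousAt
    have h1 : Tendsto (fun z => ftil (x z) (μ t)) (nhdsWithin t (Ici t₀))
        (nhds (ftil (x t) (μ t))) := hFc.tendsto.comp (hxc t ht)
    have h2 : Tendsto (fun z => ftil (x z) (μ z) - ftil (x z) (μ t))
        (nhdsWithin t (Ici t₀)) (nhds 0) := by
      apply squeeze_zero_norm' (a := fun z => κ * |μ z - μ t|) ?_ ?_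
      · filter_upwards [self_mem_nhdsWithin] with z hz
        rw [Real.norm_eq_abs]
        exact hLip (x z) (μ t) (μ z) hμt (hμpos z hz)
      · have h5 : Tendsto (fun z => κ * |μ z - μ t|) (nhdsWithin t (Ici t₀))
            (nhds (κ * |μ t - μ t|)) := (((hμc t ht).sub tendsto_const_nhds).abs).const_mul κ
        simpa using h5
    have h3 := h2.add h1
    simp only [sub_add_cancel, zero_add] at h3
    exact h3
  have hPc : ContinuousOn P (Ici t₀) := by
    rw [hPdef]; exact continuous_inner.comp_continuousOn (hx'c.prodMk hx'c)
  have hQc : ContinuousOn Q (Ici t₀) := by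
    rw [hQdef]; exact continuous_inner.comp_continuousOn ((hxc.sub continuousOn_const).prodMk hx'c)
  have hUc : ContinuousOn U (Ici t₀) := by
    rw [hUdef]
    exact continuous_inner.comp_continuousOn
      ((hxc.sub continuousOn_const).prodMk (hxc.sub continuousOn_const))
  have hwc : ContinuousOn w (Ici t₀) := by
    rw [hwdef]; exact (hψc.sub continuousOn_const).add (continuousOn_const.mul hμc)
  have hfIc : ∀ lam, ContinuousOn (fI lam) (Ici t₀) := by
    intro lam
    rw [hfIdef]
    exact (continuousOn_const.mul (continuousOn_id.mul hwc)).add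
      (continuousOn_const.mul (continuousOn_id.mul hPc))
  -- nonnegativity
  have happ : ∀ t, t₀ ≤ t → f (x t) - κ * μ t ≤ ψ t ∧ ψ t ≤ f (x t) + κ * μ t := by
    intro t ht
    have h := abs_le.1 (happrox (x t) (μ t) (hμpos t ht))
    constructor <;> [skip; skip] <;> simp only [hψdef] <;> linarith [h.1, h.2]
  have hw0 : ∀ t, t₀ ≤ t → 0 ≤ w t := by
    intro t ht
    have h := (happ t ht).1
    have h2 := hxs (x t)
    simp only [hwdef]
    linarith [ (hμpos t ht).le, hκ.le ]
  have hgap : ∀ t, t₀ ≤ t → f (x t) - f xs ≤ w t := by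
    intro t ht
    have h := (happ t ht).1
    simp only [hwdef]
    linarith
  have hP0 : ∀ t, 0 ≤ P t := by rw [hPdef]; exact fun t => real_inner_self_nonneg
  have hU0 : ∀ t, 0 ≤ U t := by rw [hUdef]; exact fun t => real_inner_self_nonneg
  have hq0 : ∀ t, t₀ ≤ t → 0 ≤ q t := by
    intro t ht
    simp only [hqdef]
    have h1 := mul_nonneg (sq_nonneg t) (hw0 t ht)
    have h2 := mul_nonneg (sq_nonneg t) (hP0 t)
    linarith
  have hB : ∀ t, t₀ ≤ t → w t - 2*κ*μ t ≤ ⟪x t - xs, G (x t) (μ t)⟫ := by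
    intro t ht
    have hμt : 0 < μ t := hμpos t ht
    have h := aux_grad_ineq (hconv (μ t) hμt) (hG (x t) (μ t) hμt) xs
    have h2 := (abs_le.1 (happrox xs (μ t) hμt)).2
    have h3 : ⟪G (x t) (μ t), xs - x t⟫ = -⟪x t - xs, G (x t) (μ t)⟫ := by
      rw [real_inner_comm, show xs - x t = -(x t - xs) from (neg_sub _ _).symm, inner_neg_left]
    rw [h3] at h
    simp only [hwdef, hψdef]
    linarith
  have hexp : ∀ (lam t : ℝ), ⟪lam•(x t - xs) + t•(x' t), lam•(x t - xs) + t•(x' t)⟫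
      = lam^2 * U t + 2*(lam*t)*Q t + t^2 * P t := by
    intro lam t
    simp only [inner_add_left, inner_add_right, real_inner_smul_left, real_inner_smul_right,
      hUdef, hQdef, hPdef]
    rw [real_inner_comm (x' t) (x t - xs)]
    ring
  have hE0 : ∀ lam, 2 < lam → lam < α - 1 → ∀ t, t₀ ≤ t → 0 ≤ E lam t := by
    intro lam hl1 hl2 t ht
    have hid : E lam t = t^2 * w t
        + 1/2 * ⟪lam•(x t - xs) + t•(x' t), lam•(x t - xs) + t•(x' t)⟫
        + lam*(α-1-lam)/2 * U t := by
      rw [hexp]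
      simp only [hEdef, hqdef, h1def]
      ring
    have h1 : 0 ≤ t^2 * w t := mul_nonneg (sq_nonneg t) (hw0 t ht)
    have h2 : (0:ℝ) ≤ ⟪lam•(x t - xs) + t•(x' t), lam•(x t - xs) + t•(x' t)⟫ :=
      real_inner_self_nonneg
    have h4 : 0 ≤ lam*(α-1-lam) := by nlinarith
    have h5 := mul_nonneg h4 (hU0 t)
    rw [hid]
    linarith
  -- FTC facts
  have hsub2 : ∀ t : ℝ, t₀ ≤ t → Ioi t ⊆ Ici t₀ := fun t ht z hz => le_trans ht (le_of_lt hz)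
  have hIint : ∀ lam t, t₀ ≤ t → IntervalIntegrable (fI lam) MeasureTheory.volume t₀ t := by
    intro lam t ht
    apply ContinuousOn.intervalIntegrable
    rw [uIcc_of_le ht]
    exact (hfIc lam).mono Icc_subset_Ici_self
  have hμint : ∀ t, t₀ ≤ t → IntervalIntegrable (fun s => s * μ s) MeasureTheory.volume t₀ t := by
    intro t ht
    apply ContinuousOn.intervalIntegrable
    rw [uIcc_of_le ht]
    exact (continuousOn_id.mul hμc).mono Icc_subset_Ici_self
  have hIder : ∀ lam t, t₀ ≤ t → HasDerivWithinAt (II lam) (fI lam t) (Ici t) t := by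
    intro lam t ht
    simp only [hIdef]
    exact intervalIntegral.integral_hasDerivWithinAt_right (hIint lam t ht)
      ⟨Ioc t (t+1), Ioc_mem_nhdsGT_of_mem ⟨le_rfl, by linarith⟩,
        ((hfIc lam).mono (fun z hz => le_trans ht hz.1.le)).aestronglyMeasurable
          measurableSet_Ioc⟩
      (((hfIc lam) t ht).mono (hsub2 t ht))
  have hJder : ∀ t, t₀ ≤ t → HasDerivWithinAt Jc (t * μ t) (Ici t) t := by
    intro t ht
    simp only [hJdef]
    exact intervalIntegral.integral_hasDerivWithinAt_right (hμint t ht)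
      ⟨Ioc t (t+1), Ioc_mem_nhdsGT_of_mem ⟨le_rfl, by linarith⟩,
        ((continuousOn_id.mul hμc).mono (fun z hz => le_trans ht hz.1.le)).aestronglyMeasurable
          measurableSet_Ioc⟩
      (((continuousOn_id.mul hμc) t ht).mono (hsub2 t ht))
  have hIcont : ∀ lam, ContinuousOn (II lam) (Ici t₀) := by
    intro lam t ht
    rcases eq_or_lt_of_le (show t₀ ≤ t from ht) with heq' | hlt
    · exact heq' ▸ (hIder lam t₀ le_rfl).continuousWithinAt
    · have hca : HasDerivAt (II lam) (fI lam t) t := by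
        simp only [hIdef]
        apply intervalIntegral.integral_hasDerivAt_right (hIint lam t ht)
        · exact ⟨Ioo t₀ (t+1), Ioo_mem_nhds hlt (by linarith),
            ((hfIc lam).mono (fun z hz => hz.1.le)).aestronglyMeasurable measurableSet_Ioo⟩
        · exact ((hfIc lam) t ht).continuousAt
            (mem_of_superset (Ioi_mem_nhds hlt) Ioi_subset_Ici_self)
      exact hca.continuousAt.continuousWithinAt
  have hJcont : ContinuousOn Jc (Ici t₀) := by
    intro t ht
    rcases eq_or_lt_of_le (show t₀ ≤ t from ht) with heq' | hlt
    · exact heq' ▸ (hJder t₀ le_rfl).continuousWithinAt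
    · have hca : HasDerivAt Jc (t * μ t) t := by
        simp only [hJdef]
        apply intervalIntegral.integral_hasDerivAt_right (hμint t ht)
        · exact ⟨Ioo t₀ (t+1), Ioo_mem_nhds hlt (by linarith),
            ((continuousOn_id.mul hμc).mono (fun z hz => hz.1.le)).aestronglyMeasurable
              measurableSet_Ioo⟩
        · exact ((continuousOn_id.mul hμc) t ht).continuousAt
            (mem_of_superset (Ioi_mem_nhds hlt) Ioi_subset_Ici_self)
      exact hca.continuousAt.continuousWithinAt
  -- derivative of the smooth part
  have hDder : ∀ lam t, t₀ ≤ t → HasDerivAt (D lam)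
      (-(f xs)*(2*t) + κ*(2*t*μ t + t^2*μ' t) + (t * P t + t^2 * ⟪x' t, x'' t⟫)
        + lam * ((α-1)*Q t + (Q t + t * (P t + ⟪x t - xs, x'' t⟫)))) t := by
    intro lam t ht
    have hsq : HasDerivAt (fun s : ℝ => s^2) (2*t) t := by
      simpa using hasDerivAt_pow 2 t
    have hU' : HasDerivAt U (2 * Q t) t := by
      rw [hUdef, hQdef]
      have h : HasDerivAt (fun z => ⟪x z - xs, x z - xs⟫)
          (⟪x t - xs, x' t⟫ + ⟪x' t, x t - xs⟫) t :=
        HasDerivAt.inner ℝ ((hx t ht).sub_const xs) ((hx t ht).sub_const xs)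
      have e : ⟪x t - xs, x' t⟫ + ⟪x' t, x t - xs⟫ = 2 * ⟪x t - xs, x' t⟫ := by
        rw [real_inner_comm (x' t) (x t - xs)]; ring
      rw [e] at h
      exact h
    have hQ' : HasDerivAt Q (P t + ⟪x t - xs, x'' t⟫) t := by
      rw [hQdef, hPdef]
      have h : HasDerivAt (fun z => ⟪x z - xs, x' z⟫)
          (⟪x t - xs, x'' t⟫ + ⟪x' t, x' t⟫) t :=
        HasDerivAt.inner ℝ ((hx t ht).sub_const xs) (hx' t ht)
      have e : ⟪x t - xs, x'' t⟫ + ⟪x' t, x' t⟫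
          = ⟪x' t, x' t⟫ + ⟪x t - xs, x'' t⟫ := by ring
      rw [e] at h
      exact h
    have hP' : HasDerivAt P (2 * ⟪x' t, x'' t⟫) t := by
      rw [hPdef]
      have h : HasDerivAt (fun z => ⟪x' z, x' z⟫)
          (⟪x' t, x'' t⟫ + ⟪x'' t, x' t⟫) t :=
        HasDerivAt.inner ℝ (hx' t ht) (hx' t ht)
      have e : ⟪x' t, x'' t⟫ + ⟪x'' t, x' t⟫ = 2 * ⟪x' t, x'' t⟫ := by
        rw [real_inner_comm (x'' t) (x' t)]; ring
      rw [e] at h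
      exact h
    have hh1' : HasDerivAt h₁ ((α-1)/2 * (2 * Q t) + (1 * Q t + t * (P t + ⟪x t - xs, x'' t⟫))) t := by
      rw [h1def]
      exact (hU'.const_mul ((α-1)/2)).add ((hasDerivAt_id t).mul hQ')
    have hA : HasDerivAt (fun s : ℝ => -(f xs) * s^2) (-(f xs) * (2*t)) t := hsq.const_mul (-(f xs))
    have hBt : HasDerivAt (fun s : ℝ => κ * (s^2 * μ s)) (κ * ((2*t) * μ t + t^2 * μ' t)) t :=
      (hsq.mul (hμderiv t ht)).const_mul κ
    have hC : HasDerivAt (fun s : ℝ => s^2/2 * P s) ((2*t)/2 * P t + t^2/2 * (2 * ⟪x' t, x'' t⟫)) t :=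
      (hsq.div_const 2).mul hP'
    have hDt : HasDerivAt (fun s : ℝ => lam * h₁ s)
        (lam * ((α-1)/2 * (2 * Q t) + (1 * Q t + t * (P t + ⟪x t - xs, x'' t⟫)))) t :=
      hh1'.const_mul lam
    have htot := ((hA.add hBt).add hC).add hDt
    simp only [hDdef]
    exact htot.congr_deriv (by ring)
  -- slope estimate
  have hslope : ∀ lam, 2 < lam → lam < α - 1 → ∀ t, t₀ ≤ t → ∀ r : ℝ, 0 < r →
      ∀ᶠ z in nhdsWithin t (Ioi t), slope (Φ lam) t z < r := by
    intro lam hl1 hl2 t ht r hr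
    have htpos : 0 < t := lt_of_lt_of_le ht₀ ht
    have hμt : 0 < μ t := hμpos t ht
    obtain ⟨A, hA⟩ : ∃ a : ℝ, a = ⟪x' t, G (x t) (μ t)⟫ := ⟨_, rfl⟩
    obtain ⟨Bq, hBq⟩ : ∃ b : ℝ, b = ⟪x t - xs, G (x t) (μ t)⟫ := ⟨_, rfl⟩
    have hx2 : x'' t = -((α / t) • x' t + G (x t) (μ t)) := by
      have h := heq t ht
      rw [add_assoc] at h
      exact eq_neg_of_add_eq_zero_left h
    have hip1 : ⟪x' t, x'' t⟫ = -((α/t) * P t + A) := by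
      rw [hA, hPdef, hx2, inner_neg_right, inner_add_right, real_inner_smul_right]
    have hip2 : ⟪x t - xs, x'' t⟫ = -((α/t) * Q t + Bq) := by
      rw [hBq, hQdef, hx2, inner_neg_right, inner_add_right, real_inner_smul_right]
    obtain ⟨ρ, hρdef⟩ : ∃ p : ℝ, p =
        (-(f xs)*(2*t) + κ*(2*t*μ t + t^2*μ' t) + (t * P t + t^2 * ⟪x' t, x'' t⟫)
          + lam * ((α-1)*Q t + (Q t + t * (P t + ⟪x t - xs, x'' t⟫))))
        + fI lam t - 2*lam*κ * (t * μ t) := ⟨_, rfl⟩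
    have hRder : HasDerivWithinAt (fun z => D lam z + II lam z - 2*lam*κ * Jc z) ρ (Ici t) t := by
      rw [hρdef]
      exact ((hDder lam t ht).hasDerivWithinAt.add (hIder lam t ht)).sub
        ((hJder t ht).const_mul (2*lam*κ))
    have hkey : 2*t*ψ t + t^2*(A - κ*μ' t) + ρ ≤ 0 := by
      have h6 : w t - 2*κ*μ t ≤ Bq := by rw [hBq]; exact hB t ht
      have h7 : 0 ≤ lam * t := mul_nonneg (by linarith) htpos.le
      have hident : 2*t*ψ t + t^2*(A - κ*μ' t) + ρ = lam * t * ((w t - 2*κ*μ t) - Bq) := by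
        rw [hρdef, hip1, hip2]
        simp only [hfIdef, hwdef]
        field_simp
        ring
      rw [hident]
      nlinarith [h6, h7]
    have hRslope : Tendsto (slope (fun z => D lam z + II lam z - 2*lam*κ * Jc z) t)
        (nhdsWithin t (Ioi t)) (nhds ρ) :=
      (hasDerivWithinAt_iff_tendsto_slope' <| lt_irrefl t).1 hRder.Ioi_of_Ici
    have hFx : HasDerivAt (fun z => ftil (x z) (μ t)) A t := by
      have h := (hG (x t) (μ t) hμt).hasFDerivAt.comp_hasDerivAt t (hx t ht)
      rw [hA, real_inner_comm]
      simpa [InnerProductSpace.toDual_apply_apply, Function.comp_def] using h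
    have T1 : Tendsto (slope (fun z => ftil (x z) (μ t)) t) (nhdsWithin t (Ioi t)) (nhds A) :=
      (hasDerivAt_iff_tendsto_slope.1 hFx).mono_left (nhdsWithin_mono t fun z hz => ne_of_gt hz)
    have T2 : Tendsto (slope μ t) (nhdsWithin t (Ioi t)) (nhds (μ' t)) :=
      (hasDerivAt_iff_tendsto_slope.1 (hμderiv t ht)).mono_left
        (nhdsWithin_mono t fun z hz => ne_of_gt hz)
    have Tz2 : Tendsto (fun z : ℝ => z^2) (nhdsWithin t (Ioi t)) (nhds (t^2)) :=
      ((continuous_pow 2).tendsto t).mono_left nhdsWithin_le_nhds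
    have Tψ : Tendsto (fun z : ℝ => ψ t * (z + t)) (nhdsWithin t (Ioi t)) (nhds (ψ t * (t + t))) :=
      (((continuous_id.add continuous_const).tendsto t).mono_left nhdsWithin_le_nhds).const_mul _
    have Tc : Tendsto (fun z => z^2 * (slope (fun u => ftil (x u) (μ t)) t z - κ * slope μ t z)
        + ψ t * (z + t)) (nhdsWithin t (Ioi t))
        (nhds (t^2 * (A - κ * μ' t) + ψ t * (t + t))) :=
      (Tz2.mul (T1.sub (T2.const_mul κ))).add Tψ
    have hev2 : ∀ᶠ z in nhdsWithin t (Ioi t),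
        z^2 * (slope (fun u => ftil (x u) (μ t)) t z - κ * slope μ t z) + ψ t * (z + t)
          < t^2 * (A - κ * μ' t) + ψ t * (t + t) + r/2 :=
      Tc.eventually_lt_const (by linarith)
    have hev3 : ∀ᶠ z in nhdsWithin t (Ioi t),
        slope (fun z => D lam z + II lam z - 2*lam*κ * Jc z) t z < ρ + r/2 :=
      hRslope.eventually_lt_const (by linarith)
    have hev1 : ∀ᶠ z in nhdsWithin t (Ioi t), slope (fun u => u^2 * ψ u) t z
        ≤ z^2 * (slope (fun u => ftil (x u) (μ t)) t z - κ * slope μ t z) + ψ t * (z + t) := by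
      filter_upwards [self_mem_nhdsWithin] with z hz
      have hzt : t < z := hz
      have hz0 : (0:ℝ) < z - t := by linarith
      have hzI : t₀ ≤ z := le_trans ht hzt.le
      have hψb : slope ψ t z ≤ slope (fun u => ftil (x u) (μ t)) t z - κ * slope μ t z := by
        have hnum : ψ z - ψ t
            ≤ (ftil (x z) (μ t) - ftil (x t) (μ t)) - κ * (μ z - μ t) := by
          have hl := hLip (x z) (μ t) (μ z) hμt (hμpos z hzI)
          have hmz : μ z ≤ μ t := hμanti ht hzI hzt.le
          have h8 : |μ z - μ t| = μ t - μ z := by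
            rw [abs_of_nonpos (by linarith)]; ring
          rw [h8] at hl
          have h9 := (abs_le.1 hl).2
          simp only [hψdef]
          linarith
        have e : slope (fun u => ftil (x u) (μ t)) t z - κ * slope μ t z
            = ((ftil (x z) (μ t) - ftil (x t) (μ t)) - κ * (μ z - μ t))/(z - t) := by
          simp only [slope_def_field]
          field_simp
        rw [e, slope_def_field, div_le_div_iff_of_pos_right hz0]
        exact hnum
      have hsN : slope (fun u => u^2 * ψ u) t z = z^2 * slope ψ t z + ψ t * (z + t) := by
        simp only [slope_def_field]
        field_simp
        ring
      have hmul : z^2 * slope ψ t z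
          ≤ z^2 * (slope (fun u => ftil (x u) (μ t)) t z - κ * slope μ t z) :=
        mul_le_mul_of_nonneg_left hψb (sq_nonneg z)
      rw [hsN]
      linarith
    filter_upwards [hev1, hev2, hev3, self_mem_nhdsWithin] with z h1 h2 h3 hz
    have hzt : t < z := hz
    have hsplit : slope (Φ lam) t z = slope (fun u => u^2 * ψ u) t z
        + slope (fun z => D lam z + II lam z - 2*lam*κ * Jc z) t z := by
      simp only [hΦdef, slope_def_field]
      ring
    rw [hsplit]
    linarith
  have hΦanti : ∀ lam, 2 < lam → lam < α - 1 → AntitoneOn (Φ lam) (Ici t₀) := by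
    intro lam hl1 hl2
    apply aux_dini_antitoneOn ?_ (hslope lam hl1 hl2)
    simp only [hΦdef, hDdef, h1def]
    apply ContinuousOn.sub
    apply ContinuousOn.add
    apply ContinuousOn.add
    · exact (continuousOn_pow 2).mul hψc
    · apply ContinuousOn.add
      apply ContinuousOn.add
      apply ContinuousOn.add
      · exact continuousOn_const.mul (continuousOn_pow 2)
      · exact continuousOn_const.mul ((continuousOn_pow 2).mul hμc)
      · exact ((continuousOn_pow 2).div_const 2).mul hPc
      · exact continuousOn_const.mul
          ((continuousOn_const.mul hUc).add (continuousOn_id.mul hQc))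
    · exact hIcont lam
    · exact continuousOn_const.mul hJcont
  -- basic nonneg/monotone facts for the integrals
  have hfI0 : ∀ lam, 2 < lam → lam < α-1 → ∀ s, t₀ ≤ s → 0 ≤ fI lam s := by
    intro lam hl1 hl2 s hs
    simp only [hfIdef]
    have e1 : 0 ≤ (lam-2) * (s * w s) :=
      mul_nonneg (by linarith) (mul_nonneg (le_trans ht₀.le hs) (hw0 s hs))
    have e2 : 0 ≤ (α-1-lam) * (s * P s) :=
      mul_nonneg (by linarith) (mul_nonneg (le_trans ht₀.le hs) (hP0 s))
    linarith
  have hIIint : ∀ lam a b, t₀ ≤ a → a ≤ b → IntervalIntegrable (fI lam) MeasureTheory.volume a b := by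
    intro lam a b ha hab
    apply ContinuousOn.intervalIntegrable
    rw [uIcc_of_le hab]
    exact (hfIc lam).mono (fun z hz => le_trans ha hz.1)
  have hImono : ∀ lam, 2 < lam → lam < α-1 → MonotoneOn (II lam) (Ici t₀) := by
    intro lam hl1 hl2 a ha b hb hab
    simp only [hIdef]
    have hsplit := intervalIntegral.integral_add_adjacent_intervals
      (hIint lam a ha) (hIIint lam a b ha hab)
    have hnn : 0 ≤ ∫ s in a..b, fI lam s :=
      intervalIntegral.integral_nonneg hab (fun u hu => hfI0 lam hl1 hl2 u (le_trans ha hu.1))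
    linarith
  have hI0 : ∀ lam, 2 < lam → lam < α-1 → ∀ t, t₀ ≤ t → 0 ≤ II lam t := by
    intro lam hl1 hl2 t ht
    simp only [hIdef]
    exact intervalIntegral.integral_nonneg ht (fun u hu => hfI0 lam hl1 hl2 u hu.1)
  obtain ⟨C₀, hC₀⟩ : ∃ c : ℝ, c = ∫ s in Ici t₀, s * μ s := ⟨_, rfl⟩
  have hJb : ∀ t, t₀ ≤ t → Jc t ≤ C₀ := by
    intro t ht
    simp only [hJdef]
    rw [intervalIntegral.integral_of_le ht, hC₀]
    apply MeasureTheory.setIntegral_mono_set hH1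
    · refine (MeasureTheory.ae_restrict_iff' measurableSet_Ici).2 (Filter.Eventually.of_forall ?_)
      intro s hs
      exact mul_nonneg (le_trans ht₀.le hs) (hμpos s hs).le
    · exact HasSubset.Subset.eventuallyLE (fun z hz => hz.1.le)
  have hJ0 : ∀ t, t₀ ≤ t → 0 ≤ Jc t := by
    intro t ht
    simp only [hJdef]
    exact intervalIntegral.integral_nonneg ht
      (fun u hu => mul_nonneg (le_trans ht₀.le hu.1) (hμpos u hu.1).le)
  have hμint2 : ∀ a b, t₀ ≤ a → a ≤ b →
      IntervalIntegrable (fun s => s * μ s) MeasureTheory.volume a b := by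
    intro a b ha hab
    apply ContinuousOn.intervalIntegrable
    rw [uIcc_of_le hab]
    exact (continuousOn_id.mul hμc).mono (fun z hz => le_trans ha hz.1)
  have hJmono : MonotoneOn Jc (Ici t₀) := by
    intro a ha b hb hab
    simp only [hJdef]
    have hsplit := intervalIntegral.integral_add_adjacent_intervals
      (hμint a ha) (hμint2 a b ha hab)
    have hnn : 0 ≤ ∫ s in a..b, s * μ s :=
      intervalIntegral.integral_nonneg hab
        (fun u hu => mul_nonneg (le_trans (le_trans ht₀.le ha) hu.1) (hμpos u (le_trans ha hu.1)).le)
    linarith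
  have hII00 : ∀ lam, II lam t₀ = 0 := by
    intro lam; simp only [hIdef]; exact intervalIntegral.integral_same
  have hJc00 : Jc t₀ = 0 := by simp only [hJdef]; exact intervalIntegral.integral_same
  have hIub : ∀ lam, 2 < lam → lam < α-1 → ∀ t, t₀ ≤ t →
      II lam t ≤ E lam t₀ + 2*lam*κ*C₀ := by
    intro lam hl1 hl2 t ht
    have hmono := hΦanti lam hl1 hl2 self_mem_Ici ht ht
    have e1 := hΦE lam t
    have e2 := hΦE lam t₀
    have hE := hE0 lam hl1 hl2 t ht
    have hlk : (0:ℝ) ≤ 2*lam*κ := mul_nonneg (by linarith) hκ.le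
    have hmm := mul_le_mul_of_nonneg_left (hJb t ht) hlk
    rw [hII00 lam, hJc00] at e2
    linarith
  have hΦlb : ∀ lam, 2 < lam → lam < α-1 → ∀ t, t₀ ≤ t → -(2*lam*κ*C₀) ≤ Φ lam t := by
    intro lam hl1 hl2 t ht
    have e1 := hΦE lam t
    have hE := hE0 lam hl1 hl2 t ht
    have hI := hI0 lam hl1 hl2 t ht
    have hlk : (0:ℝ) ≤ 2*lam*κ := mul_nonneg (by linarith) hκ.le
    have hmm := mul_le_mul_of_nonneg_left (hJb t ht) hlk
    linarith
  -- the two parameters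
  have hα3 : 0 < α - 3 := by linarith
  obtain ⟨lam₁, hlam₁⟩ : ∃ l : ℝ, l = 2 + (α-3)/3 := ⟨_, rfl⟩
  obtain ⟨lam₂, hlam₂⟩ : ∃ l : ℝ, l = 2 + 2*(α-3)/3 := ⟨_, rfl⟩
  have hl11 : 2 < lam₁ := by rw [hlam₁]; linarith
  have hl12 : lam₁ < α - 1 := by rw [hlam₁]; linarith
  have hl21 : 2 < lam₂ := by rw [hlam₂]; linarith
  have hl22 : lam₂ < α - 1 := by rw [hlam₂]; linarith
  have hllt : lam₁ < lam₂ := by rw [hlam₁, hlam₂]; linarith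
  -- limits
  obtain ⟨JL, hJL⟩ : ∃ L, Tendsto Jc atTop (nhds L) := aux_tendsto_of_monotoneOn hJmono hJb
  obtain ⟨IL₁, hIL₁⟩ : ∃ L, Tendsto (II lam₁) atTop (nhds L) :=
    aux_tendsto_of_monotoneOn (hImono lam₁ hl11 hl12) (hIub lam₁ hl11 hl12)
  obtain ⟨IL₂, hIL₂⟩ : ∃ L, Tendsto (II lam₂) atTop (nhds L) :=
    aux_tendsto_of_monotoneOn (hImono lam₂ hl21 hl22) (hIub lam₂ hl21 hl22)
  obtain ⟨PL₁, hPL₁⟩ : ∃ L, Tendsto (Φ lam₁) atTop (nhds L) :=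
    aux_tendsto_of_antitoneOn (hΦanti lam₁ hl11 hl12) (hΦlb lam₁ hl11 hl12)
  obtain ⟨PL₂, hPL₂⟩ : ∃ L, Tendsto (Φ lam₂) atTop (nhds L) :=
    aux_tendsto_of_antitoneOn (hΦanti lam₂ hl21 hl22) (hΦlb lam₂ hl21 hl22)
  have hE1lim : Tendsto (E lam₁) atTop (nhds (PL₁ - IL₁ + 2*lam₁*κ * JL)) := by
    have h := (hPL₁.sub hIL₁).add (hJL.const_mul (2*lam₁*κ))
    apply h.congr
    intro t
    have := hΦE lam₁ t
    linarith
  have hE2lim : Tendsto (E lam₂) atTop (nhds (PL₂ - IL₂ + 2*lam₂*κ * JL)) := by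
    have h := (hPL₂.sub hIL₂).add (hJL.const_mul (2*lam₂*κ))
    apply h.congr
    intro t
    have := hΦE lam₂ t
    linarith
  have hh1lim : Tendsto h₁ atTop
      (nhds (((PL₂ - IL₂ + 2*lam₂*κ * JL) - (PL₁ - IL₁ + 2*lam₁*κ * JL))/(lam₂ - lam₁))) := by
    have h := (hE2lim.sub hE1lim).div_const (lam₂ - lam₁)
    apply h.congr
    intro t
    simp only [hEdef]
    have hne : lam₂ - lam₁ ≠ 0 := sub_ne_zero.2 hllt.ne'
    field_simp
    ring
  obtain ⟨L, hqlim⟩ : ∃ L, Tendsto q atTop (nhds L) := by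
    refine ⟨_, (hE1lim.sub (hh1lim.const_mul lam₁)).congr ?_⟩
    intro t
    simp only [hEdef]
    ring
  have hL0 : 0 ≤ L := by
    apply ge_of_tendsto hqlim
    filter_upwards [eventually_ge_atTop t₀] with t ht
    exact hq0 t ht
  have hLeq : L = 0 := by
    by_contra hne
    have hLpos : 0 < L := lt_of_le_of_ne hL0 (Ne.symm hne)
    obtain ⟨c, hc⟩ : ∃ c : ℝ, c = min (lam₁ - 2) (2*(α - 1 - lam₁)) := ⟨_, rfl⟩
    have hcpos : 0 < c := by rw [hc]; apply lt_min <;> linarith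
    have hcle1 : c ≤ lam₁ - 2 := by rw [hc]; exact min_le_left _ _
    have hcle2 : c ≤ 2*(α - 1 - lam₁) := by rw [hc]; exact min_le_right _ _
    obtain ⟨T, hT⟩ := Filter.eventually_atTop.1
      ((hqlim.eventually_const_lt (by linarith : L/2 < L)).and (eventually_ge_atTop t₀))
    have hTt₀ : t₀ ≤ T := (hT T le_rfl).2
    have hTpos : 0 < T := lt_of_lt_of_le ht₀ hTt₀
    obtain ⟨MB, hMB⟩ : ∃ m : ℝ, m = E lam₁ t₀ + 2*lam₁*κ*C₀ := ⟨_, rfl⟩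
    have hMBa : ∀ t, t₀ ≤ t → II lam₁ t ≤ MB := by
      intro t ht; rw [hMB]; exact hIub lam₁ hl11 hl12 t ht
    obtain ⟨K, hK⟩ : ∃ k : ℝ, k = (MB - II lam₁ T)/(c*(L/2)) + 1 := ⟨_, rfl⟩
    have hKpos : 0 < K := by
      rw [hK]
      have h1 : 0 ≤ MB - II lam₁ T := by linarith [hMBa T hTt₀]
      have h2 : 0 < c*(L/2) := by positivity
      positivity
    obtain ⟨tt, htt⟩ : ∃ t : ℝ, t = T * Real.exp K := ⟨_, rfl⟩
    have httT : T ≤ tt := by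
      rw [htt]
      nlinarith [Real.one_le_exp hKpos.le, hTpos]
    have httt₀ : t₀ ≤ tt := le_trans hTt₀ httT
    -- pointwise comparison on [T, tt]
    have hptc : ∀ s ∈ Icc T tt, c*(L/2)*s⁻¹ ≤ fI lam₁ s := by
      intro s hs
      have hsT : T ≤ s := hs.1
      have hst₀ : t₀ ≤ s := le_trans hTt₀ hsT
      have hspos : 0 < s := lt_of_lt_of_le hTpos hsT
      have hq := (hT s hsT).1
      have hq2 : L/2 ≤ s^2 * w s + s^2/2 * P s := by
        have e : q s = s^2 * w s + s^2/2 * P s := by rw [hqdef]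
        linarith
      simp only [hfIdef]
      rw [← div_eq_mul_inv, div_le_iff₀ hspos]
      have e1 : 0 ≤ (lam₁ - 2 - c) * (s^2 * w s) :=
        mul_nonneg (by linarith) (mul_nonneg (sq_nonneg s) (hw0 s hst₀))
      have e2 : 0 ≤ ((α - 1 - lam₁) - c/2) * (s^2 * P s) :=
        mul_nonneg (by linarith) (mul_nonneg (sq_nonneg s) (hP0 s))
      have e3 : c * (L/2) ≤ c * (s^2 * w s + s^2/2 * P s) :=
        mul_le_mul_of_nonneg_left hq2 hcpos.le
      nlinarith [e1, e2, e3]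
    have hconst_int : IntervalIntegrable (fun s : ℝ => c*(L/2)*s⁻¹)
        MeasureTheory.volume T tt := by
      apply ContinuousOn.intervalIntegrable
      rw [uIcc_of_le httT]
      exact continuousOn_const.mul
        (continuousOn_id.inv₀ (fun z hz => ne_of_gt (lt_of_lt_of_le hTpos hz.1)))
    have hfint : IntervalIntegrable (fI lam₁) MeasureTheory.volume T tt :=
      hIIint lam₁ T tt hTt₀ httT
    have hmono2 := intervalIntegral.integral_mono_on httT hconst_int hfint hptc
    have hIsplit := intervalIntegral.integral_add_adjacent_intervals (hIint lam₁ T hTt₀) hfint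
    have hlogint : ∫ s in T..tt, c*(L/2)*s⁻¹ = c*(L/2) * Real.log (tt/T) := by
      rw [intervalIntegral.integral_const_mul, integral_inv]
      rw [uIcc_of_le httT]
      intro hmem
      exact absurd hmem.1 (not_le.2 hTpos)
    have hlogval : Real.log (tt/T) = K := by
      rw [htt, mul_div_cancel_left₀ _ (ne_of_gt hTpos), Real.log_exp]
    rw [hlogval] at hlogint
    have e4 : II lam₁ tt = II lam₁ T + ∫ s in T..tt, fI lam₁ s := by
      simp only [hIdef]
      linarith [hIsplit]
    have e5 : c*(L/2) * K = (MB - II lam₁ T) + c*(L/2) := by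
      rw [hK]
      have h2 : c*(L/2) ≠ 0 := by positivity
      field_simp
    have hfinal : MB + c*(L/2) ≤ II lam₁ tt := by
      rw [e4]
      linarith [hmono2]
    have hub := hMBa tt httt₀
    have hcL : 0 < c*(L/2) := by positivity
    linarith
  -- conclusion : q → 0 and the little-o statement
  have hq0' : Tendsto q atTop (nhds 0) := hLeq ▸ hqlim
  rw [isLittleO_iff]
  intro ε hε
  filter_upwards [eventually_ge_atTop (max t₀ 1), hq0'.eventually_lt_const hε] with t htm hqt
  have ht0t : t₀ ≤ t := le_trans (le_max_left _ _) htm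
  have h1t : (1:ℝ) ≤ t := le_trans (le_max_right _ _) htm
  have htp : (0:ℝ) < t := lt_of_lt_of_le one_pos h1t
  rw [Real.norm_eq_abs, Real.norm_eq_abs]
  have hfx0 : 0 ≤ f (x t) - f xs := by linarith [hxs (x t)]
  rw [abs_of_nonneg hfx0, abs_of_nonneg (by positivity : (0:ℝ) ≤ 1/t^2)]
  have h2 : t^2 * w t ≤ q t := by
    have e : q t = t^2 * w t + t^2/2 * P t := by rw [hqdef]
    nlinarith [mul_nonneg (sq_nonneg t) (hP0 t)]
  have h3 := hgap t ht0t
  rw [mul_one_div, le_div_iff₀ (by positivity : (0:ℝ) < t^2)]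
  have h4 : (f (x t) - f xs) * t^2 ≤ w t * t^2 := mul_le_mul_of_nonneg_right h3 (sq_nonneg t)
  linarith
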